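/- arXiv:2206.08126 — 2 statements merged into one kernel-verified Lean document; each statement's English description precedes it below -/
import Mathlib

section
/- Under the standing setup, and assuming additionally that σ_{1,l} + σ_{2,l} > 0 for every l, the expected misclassification rate R = (1/2)·[ P(‖ω ⊙ (Z̃₁ − μ̃₁)‖₂ > ‖ω ⊙ (Z̃₁ − μ̃₂)‖₂) + P(‖ω ⊙ (Z̃₂ − μ̃₂)‖₂ > ‖ω ⊙ (Z̃₂ − μ̃₁)‖₂) ] satisfies R ≤ 8·(Σ_{l=1}^d ω_l⁴ (σ̃_{1,l} + σ̃_{2,l})²) / (Σ_{l=1}^d ω_l² (μ̃_{1,l} − μ̃_{2,l})²)². -/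
open MeasureTheory ProbabilityTheory Finset

lemma mulInt {Ω : Type*} [MeasurableSpace Ω] {P : Measure Ω} [IsProbabilityMeasure P]
    {f g : Ω → ℝ} (hf : MemLp f 2 P) (hg : MemLp g 2 P) :
    Integrable (fun ω => f ω * g ω) P := by
  have h := (((hf.add hg).integrable_sq.sub hf.integrable_sq).sub hg.integrable_sq).div_const 2
  refine h.congr (Filter.Eventually.of_forall fun ω => ?_)
  simp only [Pi.sub_apply, Pi.add_apply]
  ring

lemma memL2Lin {Ω : Type*} [MeasurableSpace Ω] {P : Measure Ω}
    {d : ℕ} {Z : Ω → Fin d → ℝ} (hL2 : ∀ l, MemLp (fun ω => Z ω l) 2 P)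
    (c : Fin d → ℝ) : MemLp (fun ω => ∑ l, c l * Z ω l) 2 P := by
  have := memLp_finset_sum' (μ := P) (p := 2) Finset.univ
    (f := fun l (ω : Ω) => c l * Z ω l) (fun l _ => (hL2 l).const_mul _)
  refine MemLp.ae_eq (Filter.Eventually.of_forall fun ω => ?_) this
  simp

lemma varLin {Ω : Type*} [MeasurableSpace Ω] {P : Measure Ω} [IsProbabilityMeasure P]
    {d : ℕ} {Z : Ω → Fin d → ℝ} (hL2 : ∀ l, MemLp (fun ω => Z ω l) 2 P)
    {μ : Fin d → ℝ} (hμ : ∀ l, μ l = ∫ ω, Z ω l ∂P)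
    (hunc : ∀ l m, l ≠ m → ∫ ω, Z ω l * Z ω m ∂P = μ l * μ m)
    (c : Fin d → ℝ) :
    variance (fun ω => ∑ l, c l * Z ω l) P = ∑ l, (c l) ^ 2 * variance (fun ω => Z ω l) P := by
  have hY : MemLp (fun ω => ∑ l, c l * Z ω l) 2 P := memL2Lin hL2 c
  have hEY : ∫ ω, (∑ l, c l * Z ω l) ∂P = ∑ l, c l * μ l := by
    rw [integral_finset_sum _ fun l _ => ((hL2 l).integrable one_le_two).const_mul _]
    exact Finset.sum_congr rfl fun l _ => by rw [integral_const_mul, hμ l]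
  have hsq : ∫ ω, (∑ l, c l * Z ω l) ^ 2 ∂P
      = ∑ l, ∑ m, c l * c m * ∫ ω, Z ω l * Z ω m ∂P := by
    have : ∀ ω, (∑ l, c l * Z ω l) ^ 2 = ∑ l, ∑ m, c l * c m * (Z ω l * Z ω m) := by
      intro ω
      rw [sq, Finset.sum_mul_sum]
      exact Finset.sum_congr rfl fun l _ => Finset.sum_congr rfl fun m _ => by ring
    simp_rw [this]
    rw [integral_finset_sum _ fun l _ => ?_]
    · exact Finset.sum_congr rfl fun l _ => by
        rw [integral_finset_sum _ fun m _ => (mulInt (hL2 l) (hL2 m)).const_mul _]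
        exact Finset.sum_congr rfl fun m _ => integral_const_mul _ _
    · exact integrable_finset_sum _ fun m _ => (mulInt (hL2 l) (hL2 m)).const_mul _
  rw [variance_eq_sub hY]
  simp only [Pi.pow_apply]
  rw [hsq, hEY]
  have hexp : (∑ l, c l * μ l) ^ 2 = ∑ l, ∑ m, c l * c m * (μ l * μ m) := by
    rw [sq, Finset.sum_mul_sum]
    exact Finset.sum_congr rfl fun l _ => Finset.sum_congr rfl fun m _ => by ring
  rw [hexp, ← Finset.sum_sub_distrib]
  refine Finset.sum_congr rfl fun l _ => ?_
  rw [← Finset.sum_sub_distrib]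
  rw [Finset.sum_eq_single_of_mem l (Finset.mem_univ l)]
  · rw [variance_eq_sub (hL2 l)]
    simp only [Pi.pow_apply]
    have : ∫ ω, Z ω l * Z ω l ∂P = ∫ ω, (Z ω l) ^ 2 ∂P := by
      refine integral_congr_ae (Filter.Eventually.of_forall fun ω => ?_); ring
    rw [this, ← hμ l]; ring
  · intro m _ hm
    rw [hunc l m (fun h => hm h.symm)]; ring

lemma sideBound {Ω : Type*} [MeasurableSpace Ω] {P : Measure Ω} [IsProbabilityMeasure P]
    {d : ℕ} {Z : Ω → Fin d → ℝ} (hL2 : ∀ l, MemLp (fun ω => Z ω l) 2 P)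
    {μ : Fin d → ℝ} (hμ : ∀ l, μ l = ∫ ω, Z ω l ∂P)
    (hunc : ∀ l m, l ≠ m → ∫ ω, Z ω l * Z ω m ∂P = μ l * μ m)
    {ωo : Fin d → ℝ} (hωo : ∀ l, 0 < ωo l)
    {μta μtb : Fin d → ℝ} (hμta : ∀ l, μta l = μ l / ωo l)
    (hsum : ∀ l, μta l + μtb l = 2)
    (hμtann : ∀ l, 0 ≤ μta l) (hμtbnn : ∀ l, 0 ≤ μtb l)
    {w : Fin d → ℝ}
    (hΔ : 0 < ∑ l, w l ^ 2 * (μta l - μtb l) ^ 2) :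
    (P {ω | Real.sqrt (∑ l, (w l * (Z ω l / ωo l - μtb l)) ^ 2) <
            Real.sqrt (∑ l, (w l * (Z ω l / ωo l - μta l)) ^ 2)}).toReal ≤
    16 * (∑ l, w l ^ 4 * (variance (fun ω => Z ω l) P / ωo l ^ 2)) /
      (∑ l, w l ^ 2 * (μta l - μtb l) ^ 2) ^ 2 := by
  set Δ : ℝ := ∑ l, w l ^ 2 * (μta l - μtb l) ^ 2 with hΔdef
  set c : Fin d → ℝ := fun l => 2 * w l ^ 2 * (μtb l - μta l) / ωo l with hc
  set Y : Ω → ℝ := fun ω => ∑ l, c l * Z ω l with hY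
  have hYL2 : MemLp Y 2 P := memL2Lin hL2 c
  have hEY : ∫ ω, Y ω ∂P = ∑ l, c l * μ l := by
    rw [hY]
    rw [integral_finset_sum _ fun l _ => ((hL2 l).integrable one_le_two).const_mul _]
    exact Finset.sum_congr rfl fun l _ => by rw [integral_const_mul, hμ l]
  -- event inclusion
  have hsub : {ω | Real.sqrt (∑ l, (w l * (Z ω l / ωo l - μtb l)) ^ 2) <
            Real.sqrt (∑ l, (w l * (Z ω l / ωo l - μta l)) ^ 2)}
      ⊆ {ω | Δ ≤ |Y ω - ∫ ω, Y ω ∂P|} := by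
    intro ω hω
    simp only [Set.mem_setOf_eq] at hω ⊢
    have hAB : (∑ l, (w l * (Z ω l / ωo l - μtb l)) ^ 2) <
        (∑ l, (w l * (Z ω l / ωo l - μta l)) ^ 2) := by
      have := (Real.sqrt_lt_sqrt_iff (Finset.sum_nonneg fun l _ => sq_nonneg _)).mp hω
      exact this
    have key : (∑ l, (w l * (Z ω l / ωo l - μta l)) ^ 2)
        - (∑ l, (w l * (Z ω l / ωo l - μtb l)) ^ 2) = (Y ω - ∫ ω, Y ω ∂P) - Δ := by
      rw [hEY, ← Finset.sum_sub_distrib, hY, hΔdef]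
      simp only
      rw [← Finset.sum_sub_distrib, ← Finset.sum_sub_distrib]
      refine Finset.sum_congr rfl fun l _ => ?_
      have hω0 : ωo l ≠ 0 := (hωo l).ne'
      have h2 : μta l - 1 = (μta l - μtb l) / 2 := by
        have := hsum l; linarith
      have h3 : c l * Z ω l = 2 * w l ^ 2 * (μtb l - μta l) * (Z ω l / ωo l) := by
        rw [hc]; field_simp
      have hμa : μ l = μta l * ωo l := by rw [hμta l]; field_simp
      have h4 : c l * μ l = 2 * w l ^ 2 * (μtb l - μta l) * μta l := by
        rw [hc, hμa]; field_simp
      rw [h3, h4]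
      have expand : (w l * (Z ω l / ωo l - μta l)) ^ 2 - (w l * (Z ω l / ωo l - μtb l)) ^ 2
          = w l ^ 2 * (μtb l - μta l) * (2 * (Z ω l / ωo l) - (μta l + μtb l)) := by ring
      rw [expand, hsum l]
      linear_combination (2 * w l ^ 2 * (μtb l - μta l)) * h2
    have : Δ < Y ω - ∫ ω, Y ω ∂P := by linarith
    exact le_abs.mpr (Or.inl this.le)
  have hcheb := meas_ge_le_variance_div_sq (μ := P) hYL2 hΔ
  have hmono := (measure_mono hsub).trans hcheb
  have hvar : variance Y P = ∑ l, (c l) ^ 2 * variance (fun ω => Z ω l) P :=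
    varLin hL2 hμ hunc c
  have hvarle : variance Y P ≤ 16 * ∑ l, w l ^ 4 * (variance (fun ω => Z ω l) P / ωo l ^ 2) := by
    rw [hvar, Finset.mul_sum]
    refine Finset.sum_le_sum fun l _ => ?_
    have hω0 : (ωo l) ^ 2 > 0 := pow_pos (hωo l) 2
    have hvnn : 0 ≤ variance (fun ω => Z ω l) P := variance_nonneg _ _
    have hd2 : (μtb l - μta l) ^ 2 ≤ 4 := by
      have h1 := hμtann l; have h2 := hμtbnn l; have h3 := hsum l; nlinarith
    have hcsq : (c l) ^ 2 = 4 * w l ^ 4 * (μtb l - μta l) ^ 2 / ωo l ^ 2 := by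
      rw [hc]; field_simp; ring
    have hw4 : (0:ℝ) ≤ w l ^ 4 := by positivity
    have hrhs : 16 * (w l ^ 4 * (variance (fun ω => Z ω l) P / ωo l ^ 2))
        = 16 * w l ^ 4 * variance (fun ω => Z ω l) P / ωo l ^ 2 := by
      field_simp
    rw [hcsq, hrhs, div_mul_eq_mul_div, div_le_div_iff₀ hω0 hω0]
    nlinarith [mul_nonneg (mul_nonneg (mul_nonneg (sub_nonneg.mpr hd2) hw4) hvnn) hω0.le]
  have htr : (P {ω | Real.sqrt (∑ l, (w l * (Z ω l / ωo l - μtb l)) ^ 2) <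
            Real.sqrt (∑ l, (w l * (Z ω l / ωo l - μta l)) ^ 2)}).toReal
      ≤ variance Y P / Δ ^ 2 := by
    have h1 : (P _).toReal ≤ (ENNReal.ofReal (variance Y P / Δ ^ 2)).toReal :=
      ENNReal.toReal_mono ENNReal.ofReal_ne_top hmono
    rwa [ENNReal.toReal_ofReal (div_nonneg (variance_nonneg _ _) (sq_nonneg _))] at h1
  refine htr.trans ?_
  rw [div_le_div_iff₀ (pow_pos hΔ 2) (pow_pos hΔ 2)]
  exact mul_le_mul_of_nonneg_right hvarle (sq_nonneg Δ)

/-- Proposition 3.1 of the paper: the expected misclassification rate `R` of the weighted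
nearest-centroid classifier satisfies
`R ≤ 8 ∑ ω⁴ (σ̃₁+σ̃₂)² / (∑ ω² (μ̃₁-μ̃₂)²)²`. -/
theorem stmt5 {Ω : Type*} [MeasurableSpace Ω] (P : Measure Ω) [IsProbabilityMeasure P]
    (d : ℕ) (hd : 1 ≤ d) (Z1 Z2 : Ω → Fin d → ℝ)
    (hZ1nn : ∀ᵐ ω ∂P, ∀ l, 0 ≤ Z1 ω l) (hZ2nn : ∀ᵐ ω ∂P, ∀ l, 0 ≤ Z2 ω l)
    (hZ1L2 : ∀ l, MemLp (fun ω => Z1 ω l) 2 P)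
    (hZ2L2 : ∀ l, MemLp (fun ω => Z2 ω l) 2 P)
    (μ1 μ2 σ1 σ2 : Fin d → ℝ)
    (hμ1 : ∀ l, μ1 l = ∫ ω, Z1 ω l ∂P) (hμ2 : ∀ l, μ2 l = ∫ ω, Z2 ω l ∂P)
    (hσ1 : ∀ l, σ1 l = Real.sqrt (variance (fun ω => Z1 ω l) P))
    (hσ2 : ∀ l, σ2 l = Real.sqrt (variance (fun ω => Z2 ω l) P))
    (huncorr1 : ∀ l m, l ≠ m → ∫ ω, Z1 ω l * Z1 ω m ∂P = μ1 l * μ1 m)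
    (huncorr2 : ∀ l m, l ≠ m → ∫ ω, Z2 ω l * Z2 ω m ∂P = μ2 l * μ2 m)
    (hμne : ∀ l, μ1 l ≠ μ2 l)
    (ωo : Fin d → ℝ) (hωo : ∀ l, ωo l = (μ1 l + μ2 l) / 2)
    (μt1 μt2 σt1 σt2 : Fin d → ℝ)
    (hμt1 : ∀ l, μt1 l = μ1 l / ωo l) (hμt2 : ∀ l, μt2 l = μ2 l / ωo l)
    (hσt1 : ∀ l, σt1 l = σ1 l / ωo l) (hσt2 : ∀ l, σt2 l = σ2 l / ωo l)
    (hσpos : ∀ l, 0 < σ1 l + σ2 l)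
    (w : Fin d → ℝ) (hw : ∀ l, 0 ≤ w l) (hwne : w ≠ 0)
    (R : ℝ)
    (hR : R = (1 / 2) *
      ((P {ω | Real.sqrt (∑ l, (w l * (Z1 ω l / ωo l - μt2 l)) ^ 2) <
               Real.sqrt (∑ l, (w l * (Z1 ω l / ωo l - μt1 l)) ^ 2)}).toReal +
       (P {ω | Real.sqrt (∑ l, (w l * (Z2 ω l / ωo l - μt1 l)) ^ 2) <
               Real.sqrt (∑ l, (w l * (Z2 ω l / ωo l - μt2 l)) ^ 2)}).toReal)) :
    R ≤ 8 * (∑ l, (w l) ^ 4 * (σt1 l + σt2 l) ^ 2) /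
        (∑ l, (w l) ^ 2 * (μt1 l - μt2 l) ^ 2) ^ 2 := by
  have hμ1nn : ∀ l, 0 ≤ μ1 l := fun l => by
    rw [hμ1 l]; exact integral_nonneg_of_ae (hZ1nn.mono fun ω h => h l)
  have hμ2nn : ∀ l, 0 ≤ μ2 l := fun l => by
    rw [hμ2 l]; exact integral_nonneg_of_ae (hZ2nn.mono fun ω h => h l)
  have hsumpos : ∀ l, 0 < μ1 l + μ2 l := by
    intro l
    rcases (hμ1nn l).lt_or_eq with h | h
    · linarith [hμ2nn l]
    · rcases (hμ2nn l).lt_or_eq with h2 | h2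
      · linarith
      · exact absurd (h.symm.trans h2) (hμne l)
  have hωopos : ∀ l, 0 < ωo l := fun l => by rw [hωo l]; linarith [hsumpos l]
  have hsum12 : ∀ l, μt1 l + μt2 l = 2 := by
    intro l
    rw [hμt1 l, hμt2 l, hωo l]
    have := hsumpos l
    field_simp
  have hμt1nn : ∀ l, 0 ≤ μt1 l := fun l => by
    rw [hμt1 l]; exact div_nonneg (hμ1nn l) (hωopos l).le
  have hμt2nn : ∀ l, 0 ≤ μt2 l := fun l => by
    rw [hμt2 l]; exact div_nonneg (hμ2nn l) (hωopos l).le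
  have hμtne : ∀ l, μt1 l ≠ μt2 l := by
    intro l h
    rw [hμt1 l, hμt2 l, div_eq_div_iff (hωopos l).ne' (hωopos l).ne'] at h
    exact hμne l (mul_right_cancel₀ (hωopos l).ne' h)
  obtain ⟨l0, hl0⟩ : ∃ l, w l ≠ 0 := Function.ne_iff.mp hwne
  have hwl0 : 0 < w l0 := (hw l0).lt_of_ne (Ne.symm hl0)
  have hΔ : 0 < ∑ l, w l ^ 2 * (μt1 l - μt2 l) ^ 2 := by
    refine Finset.sum_pos' (fun l _ => by positivity) ⟨l0, Finset.mem_univ _, ?_⟩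
    exact mul_pos (pow_pos hwl0 2) (sq_pos_of_ne_zero (sub_ne_zero.mpr (hμtne l0)))
  have hΔ' : 0 < ∑ l, w l ^ 2 * (μt2 l - μt1 l) ^ 2 := by
    have : (∑ l, w l ^ 2 * (μt2 l - μt1 l) ^ 2) = ∑ l, w l ^ 2 * (μt1 l - μt2 l) ^ 2 :=
      Finset.sum_congr rfl fun l _ => by ring
    rw [this]; exact hΔ
  have hb1 := sideBound hZ1L2 hμ1 huncorr1 hωopos hμt1 hsum12 hμt1nn hμt2nn hΔ
  have hb2 := sideBound hZ2L2 hμ2 huncorr2 hωopos hμt2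
    (fun l => by rw [add_comm]; exact hsum12 l) hμt2nn hμt1nn hΔ'
  have hΔeq : (∑ l, w l ^ 2 * (μt2 l - μt1 l) ^ 2) = ∑ l, w l ^ 2 * (μt1 l - μt2 l) ^ 2 :=
    Finset.sum_congr rfl fun l _ => by ring
  rw [hΔeq] at hb2
  set Δ : ℝ := ∑ l, w l ^ 2 * (μt1 l - μt2 l) ^ 2 with hΔdef
  set S1 : ℝ := ∑ l, w l ^ 4 * (variance (fun ω => Z1 ω l) P / ωo l ^ 2) with hS1
  set S2 : ℝ := ∑ l, w l ^ 4 * (variance (fun ω => Z2 ω l) P / ωo l ^ 2) with hS2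
  set T : ℝ := ∑ l, w l ^ 4 * (σt1 l + σt2 l) ^ 2 with hT
  have hσt1sq : ∀ l, σt1 l ^ 2 = variance (fun ω => Z1 ω l) P / ωo l ^ 2 := by
    intro l
    rw [hσt1 l, div_pow, hσ1 l, Real.sq_sqrt (variance_nonneg _ _)]
  have hσt2sq : ∀ l, σt2 l ^ 2 = variance (fun ω => Z2 ω l) P / ωo l ^ 2 := by
    intro l
    rw [hσt2 l, div_pow, hσ2 l, Real.sq_sqrt (variance_nonneg _ _)]
  have hσt1nn : ∀ l, 0 ≤ σt1 l := fun l => by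
    rw [hσt1 l]; exact div_nonneg (by rw [hσ1 l]; exact Real.sqrt_nonneg _) (hωopos l).le
  have hσt2nn : ∀ l, 0 ≤ σt2 l := fun l => by
    rw [hσt2 l]; exact div_nonneg (by rw [hσ2 l]; exact Real.sqrt_nonneg _) (hωopos l).le
  have hST : S1 + S2 ≤ T := by
    rw [hS1, hS2, hT, ← Finset.sum_add_distrib]
    refine Finset.sum_le_sum fun l _ => ?_
    rw [← hσt1sq l, ← hσt2sq l]
    have h1 := hσt1nn l; have h2 := hσt2nn l
    have hw4 : (0:ℝ) ≤ w l ^ 4 := by positivity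
    nlinarith [mul_nonneg (mul_nonneg hw4 h1) h2]
  have hΔ2 : (0:ℝ) < Δ ^ 2 := pow_pos hΔ 2
  rw [hR]
  have hfin : (1/2 : ℝ) * (16 * S1 / Δ ^ 2 + 16 * S2 / Δ ^ 2) ≤ 8 * T / Δ ^ 2 := by
    rw [← add_div,
      show (1/2:ℝ) * ((16 * S1 + 16 * S2) / Δ ^ 2) = 8 * (S1 + S2) / Δ ^ 2 from by ring,
      div_le_div_iff₀ hΔ2 hΔ2]
    nlinarith [mul_le_mul_of_nonneg_right hST (le_of_lt hΔ2)]
  calc (1/2 : ℝ) * (_ + _) ≤ (1/2 : ℝ) * (16 * S1 / Δ ^ 2 + 16 * S2 / Δ ^ 2) := by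
        have := hb1; have := hb2
        linarith [hb1, hb2]
    _ ≤ 8 * T / Δ ^ 2 := hfin
end

section
/- For every real k with 0 < k ≤ 1, the second derivative of φ_k is strictly negative at every λ > 0; that is, φ_k is strictly concave on (0, ∞). -/
/-- The paper's channel-wise feature transformation (Eq. (1)). -/
noncomputable def phi (k : ℝ) (l : ℝ) : ℝ :=
  if 0 < l then 1 / (Real.log (1 / l + 1)) ^ k else 0

/-- `log(1+t) > t/(1+t)` for `t > 0`. -/
lemma log_gt_aux {t : ℝ} (ht : 0 < t) : t / (1 + t) < Real.log (1 + t) := by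
  have h1t : (0:ℝ) < 1 + t := by linarith
  have h := Real.log_lt_sub_one_of_pos (x := (1+t)⁻¹) (by positivity)
    (by
      intro h
      have : (1:ℝ) + t = 1 := by
        field_simp at h; linarith
      linarith)
  rw [Real.log_inv] at h
  have : (1+t)⁻¹ - 1 = -(t / (1+t)) := by field_simp; ring
  rw [this] at h
  linarith

/-- Key inequality: `(2x+1) log(1/x+1) > 2` for `x > 0`. -/
lemma key_ineq {x : ℝ} (hx : 0 < x) : 2 < (2 * x + 1) * Real.log (1 / x + 1) := by
  set f : ℝ → ℝ := fun t => (t + 2) * Real.log (1 + t) - 2 * t with hf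
  have hmono : StrictMonoOn f (Set.Ici 0) := by
    apply strictMonoOn_of_deriv_pos (convex_Ici 0)
    · apply ContinuousOn.sub
      · exact (continuousOn_id.add continuousOn_const).mul
          ((Real.continuousOn_log.comp (continuousOn_const.add continuousOn_id)
            (fun t ht => by simp only [Set.mem_Ici] at ht; intro h; simp at h; linarith)))
      · exact continuousOn_const.mul continuousOn_id
    · intro t ht
      rw [interior_Ici] at ht
      have ht0 : 0 < t := ht
      have h1t : (0:ℝ) < 1 + t := by linarith
      have hlog : HasDerivAt (fun s => Real.log (1 + s)) ((1:ℝ) / (1 + t)) t := by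
        simpa using (HasDerivAt.log ((hasDerivAt_id t).const_add 1) h1t.ne')
      have hd : HasDerivAt f (1 * Real.log (1 + t) + (t + 2) * ((1:ℝ) / (1 + t)) - 2 * 1) t := by
        rw [hf]
        exact (((hasDerivAt_id t).add_const 2).mul hlog).sub ((hasDerivAt_id t).const_mul 2)
      rw [hd.deriv]
      have hlg := log_gt_aux ht0
      have hzero : t / (1 + t) + (t + 2) * ((1:ℝ) / (1 + t)) - 2 = 0 := by
        field_simp
        ring
      nlinarith [hlg, h1t]
  have h0 : f 0 = 0 := by simp [hf]
  have hx' : (0:ℝ) < 1 / x := by positivity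
  have hfx : 0 < f (1 / x) := by
    have := hmono Set.self_mem_Ici (Set.mem_Ici.2 hx'.le) hx'
    rwa [h0] at this
  simp only [hf] at hfx
  have hlogc : Real.log (1 + 1 / x) = Real.log (1 / x + 1) := by ring_nf
  rw [hlogc] at hfx
  have hmul := mul_pos hfx hx
  have hix : x⁻¹ * x = 1 := inv_mul_cancel₀ hx.ne'
  have hexp : ((1 / x + 2) * Real.log (1 / x + 1) - 2 * (1 / x)) * x
      = (2 * x + 1) * Real.log (1 / x + 1) - 2 := by
    simp only [one_div]
    linear_combination (Real.log (x⁻¹ + 1) - 2) * hix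
  rw [hexp] at hmul
  linarith

/-- Abbreviation for log(1/x+1). -/
noncomputable def Lf (x : ℝ) : ℝ := Real.log (1 / x + 1)

lemma Lf_pos {x : ℝ} (hx : 0 < x) : 0 < Lf x := by
  apply Real.log_pos
  have h : (0:ℝ) < 1 / x := by positivity
  linarith

lemma hasDerivAt_Lf {x : ℝ} (hx : 0 < x) :
    HasDerivAt Lf (-(x * (x + 1))⁻¹) x := by
  have hxne : x ≠ 0 := hx.ne'
  have h1 : HasDerivAt (fun t : ℝ => 1 / t + 1) (-(x ^ 2)⁻¹) x := by
    simpa [one_div] using (hasDerivAt_inv hxne).add_const 1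
  have h2 : (0:ℝ) < 1 / x + 1 := by positivity
  have := h1.log h2.ne'
  convert this using 1
  · rfl
  field_simp
  ring

lemma hasDerivAt_phi (k : ℝ) {x : ℝ} (hx : 0 < x) :
    HasDerivAt (phi k) (k * Lf x ^ (-k - 1) * (x * (x + 1))⁻¹) x := by
  have hL := Lf_pos hx
  have hG : HasDerivAt (fun t => Lf t ^ (-k))
      (-(x * (x + 1))⁻¹ * (-k) * Lf x ^ (-k - 1)) x :=
    (hasDerivAt_Lf hx).rpow_const (Or.inl hL.ne')
  have heq : phi k =ᶠ[nhds x] fun t => Lf t ^ (-k) := by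
    filter_upwards [isOpen_Ioi.mem_nhds (Set.mem_Ioi.2 hx)] with t ht
    have ht0 : (0:ℝ) < t := ht
    have htL := Lf_pos ht0
    simp only [phi, if_pos (Set.mem_Ioi.1 ht), Lf]
    have h1t : (1:ℝ) ≤ 1 / t + 1 := by
      have h : (0:ℝ) < 1 / t := by positivity
      linarith
    rw [Real.rpow_neg (Real.log_nonneg h1t), one_div]
  have := hG.congr_of_eventuallyEq heq
  exact this.congr_deriv (by ring)

lemma deriv2_phi_neg (k : ℝ) (hk0 : 0 < k) (hk1 : k ≤ 1) {l : ℝ} (hl : 0 < l) :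
    deriv (deriv (phi k)) l < 0 := by
  have hL := Lf_pos hl
  have hP : (0:ℝ) < l * (l + 1) := by nlinarith
  -- deriv (phi k) agrees near l with the explicit formula
  have heq : deriv (phi k) =ᶠ[nhds l] fun x => k * Lf x ^ (-k - 1) * (x * (x + 1))⁻¹ := by
    filter_upwards [isOpen_Ioi.mem_nhds (Set.mem_Ioi.2 hl)] with x hx
    exact (hasDerivAt_phi k (Set.mem_Ioi.1 hx)).deriv
  rw [heq.deriv_eq]
  -- derivative of the explicit formula
  have h1 : HasDerivAt (fun x => Lf x ^ (-k - 1))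
      (-(l * (l + 1))⁻¹ * (-k - 1) * Lf l ^ (-k - 1 - 1)) l :=
    (hasDerivAt_Lf hl).rpow_const (Or.inl hL.ne')
  have h2 : HasDerivAt (fun x : ℝ => x * (x + 1)) (2 * l + 1) l := by
    have := (hasDerivAt_id l).mul ((hasDerivAt_id l).add_const 1)
    exact this.congr_deriv (by simp only [id]; ring)
  have h3 : HasDerivAt (fun x : ℝ => (x * (x + 1))⁻¹)
      (-(2 * l + 1) / (l * (l + 1)) ^ 2) l := h2.inv hP.ne'
  have hD : HasDerivAt (fun x => k * Lf x ^ (-k - 1) * (x * (x + 1))⁻¹)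
      ((k * (-(l * (l + 1))⁻¹ * (-k - 1) * Lf l ^ (-k - 1 - 1))) * (l * (l + 1))⁻¹
        + (k * Lf l ^ (-k - 1)) * (-(2 * l + 1) / (l * (l + 1)) ^ 2)) l :=
    (h1.const_mul k).mul h3
  rw [hD.deriv]
  -- rewrite in factored form and conclude
  have hsplit : Lf l ^ (-k - 1) = Lf l ^ (-k - 1 - 1) * Lf l := by
    have h := Real.rpow_add hL (-k - 1 - 1) 1
    rw [Real.rpow_one] at h
    rw [show (-k - 1 - 1 + 1 : ℝ) = -k - 1 by ring] at h
    exact h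
  have hApow : 0 < Lf l ^ (-k - 1 - 1) := Real.rpow_pos_of_pos hL _
  have hkey : 2 < (2 * l + 1) * Lf l := key_ineq hl
  have hfac : (k * (-(l * (l + 1))⁻¹ * (-k - 1) * Lf l ^ (-k - 1 - 1))) * (l * (l + 1))⁻¹
        + (k * Lf l ^ (-k - 1)) * (-(2 * l + 1) / (l * (l + 1)) ^ 2)
      = k * Lf l ^ (-k - 1 - 1) * ((k + 1) - (2 * l + 1) * Lf l) / (l * (l + 1)) ^ 2 := by
    rw [hsplit]
    field_simp
    ring
  rw [hfac]
  apply div_neg_of_neg_of_pos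
  · have hneg : (k + 1) - (2 * l + 1) * Lf l < 0 := by linarith
    have := mul_pos hk0 hApow
    nlinarith
  · positivity

/-- For every `0 < k ≤ 1`, the second derivative of `φ_k` is strictly negative at every
`λ > 0`; that is, `φ_k` is strictly concave on `(0, ∞)`. -/
theorem stmt15 (k : ℝ) (hk0 : 0 < k) (hk1 : k ≤ 1) :
    (∀ l : ℝ, 0 < l → deriv (deriv (phi k)) l < 0) ∧
    StrictConcaveOn ℝ (Set.Ioi 0) (phi k) := by
  constructor
  · exact fun l hl => deriv2_phi_neg k hk0 hk1 hl
  · apply strictConcaveOn_of_deriv2_neg (convex_Ioi 0)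
    · intro x hx
      exact ((hasDerivAt_phi k (Set.mem_Ioi.1 hx)).continuousAt).continuousWithinAt
    · intro x hx
      rw [interior_Ioi] at hx
      simpa [Function.iterate_succ, Function.comp] using
        deriv2_phi_neg k hk0 hk1 (Set.mem_Ioi.1 hx)
end
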